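/- The determinant det((1/π)·(1-x_i²)/(1 - 2x_i cos θ_j + x_i²))_{i,j=1}^n equals π^{-n} ∏_i (1-x_i²) · ∏_{i<j}(x_i - x_j)(1 - x_i x_j) · ∏_{i,j}(1 - 2x_i cos θ_j + x_i²)^{-1} · ∏_{i<j} 2(cos θ_i - cos θ_j). -/

import Mathlib

open Real Finset

open Matrix in

theorem cauchy_det : ∀ {n : ℕ} (u v : Fin n → ℝ), (∀ i j, (1:ℝ) - u i * v j ≠ 0) →
    Matrix.det (Matrix.of fun i j => ((1:ℝ) - u i * v j)⁻¹) =
      (∏ i, ∏ j ∈ Finset.Ioi i, ((u j - u i) * (v j - v i))) / ∏ i, ∏ j, (1 - u i * v j) := by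
  intro n
  induction n with
  | zero => intro u v h; simp [Matrix.det_isEmpty]
  | succ n ih =>
    intro u v h
    have hd : ∀ i j, (1:ℝ) - u i * v j ≠ 0 := h
    -- step 1 : subtract row 0 from the others
    have s1 : Matrix.det (Matrix.of fun i j => ((1:ℝ) - u i * v j)⁻¹) =
        Matrix.det (Matrix.of fun i j : Fin (n+1) =>
          Matrix.vecCons ((1 - u 0 * v j)⁻¹)
            (fun i' => (1 - u i'.succ * v j)⁻¹ - (1 - u 0 * v j)⁻¹) i) := by
      refine det_eq_of_forall_row_eq_smul_add_const (Matrix.vecCons 0 1) 0 (Matrix.cons_val_zero _ _) ?_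
      intro i j
      refine Fin.cases ?_ (fun i => ?_) i
      · simp
      · simp only [Matrix.of_apply, Matrix.cons_val_succ, Matrix.cons_val_zero, Pi.one_apply]
        ring
    -- step 2 : factor out (1 - u 0 * v j)⁻¹ from each column, (u i.succ - u 0) from rows
    have s2 : Matrix.det (Matrix.of fun i j : Fin (n+1) =>
          Matrix.vecCons ((1 - u 0 * v j)⁻¹)
            (fun i' => (1 - u i'.succ * v j)⁻¹ - (1 - u 0 * v j)⁻¹) i) =
        (∏ j, (1 - u 0 * v j)⁻¹) * ((∏ i : Fin n, (u i.succ - u 0)) *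
        Matrix.det (Matrix.of fun i j : Fin (n+1) =>
          Matrix.vecCons (1:ℝ) (fun i' => v j * (1 - u i'.succ * v j)⁻¹) i)) := by
      rw [show (Matrix.of fun i j : Fin (n+1) =>
          Matrix.vecCons ((1 - u 0 * v j)⁻¹)
            (fun i' => (1 - u i'.succ * v j)⁻¹ - (1 - u 0 * v j)⁻¹) i) =
          Matrix.of (fun i j : Fin (n+1) => (1 - u 0 * v j)⁻¹ *
            (Matrix.of fun i j : Fin (n+1) =>
              Matrix.vecCons (1:ℝ) (fun i' => (Matrix.vecCons (1:ℝ)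
                (fun i'' => u i''.succ - u 0) i) * (v j * (1 - u i'.succ * v j)⁻¹)) i) i j) from ?_]
      · rw [Matrix.det_mul_row]
        congr 1
        rw [show (Matrix.of fun i j : Fin (n+1) =>
              Matrix.vecCons (1:ℝ) (fun i' => (Matrix.vecCons (1:ℝ)
                (fun i'' => u i''.succ - u 0) i) * (v j * (1 - u i'.succ * v j)⁻¹)) i) =
            Matrix.of (fun i j : Fin (n+1) => (Matrix.vecCons (1:ℝ)
                (fun i'' => u i''.succ - u 0) i) * (Matrix.of fun i j : Fin (n+1) =>
              Matrix.vecCons (1:ℝ) (fun i' => v j * (1 - u i'.succ * v j)⁻¹) i) i j) from ?_]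
        · rw [Matrix.det_mul_column]
          congr 1
          rw [Fin.prod_univ_succ]
          simp
        · ext i j
          refine Fin.cases ?_ (fun i => ?_) i <;> simp
      · ext i j
        refine Fin.cases ?_ (fun i => ?_) i
        · simp
        · simp only [Matrix.of_apply, Matrix.cons_val_succ, Matrix.cons_val_zero]
          have h1 : (1:ℝ) - v j * u 0 ≠ 0 := by rw [mul_comm]; exact hd 0 j
          have h2 : (1:ℝ) - v j * u i.succ ≠ 0 := by rw [mul_comm]; exact hd i.succ j
          field_simp [hd i.succ j, hd 0 j, h1, h2]
          ring
    -- step 3 : subtract column 0 from the others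
    set N : Matrix (Fin (n+1)) (Fin (n+1)) ℝ := Matrix.of fun i j : Fin (n+1) =>
          Matrix.vecCons (1:ℝ) (fun i' => v j * (1 - u i'.succ * v j)⁻¹) i with hN
    set P : Matrix (Fin (n+1)) (Fin (n+1)) ℝ := Matrix.of fun i j : Fin (n+1) =>
          Matrix.vecCons
            (Matrix.vecCons (1:ℝ) (fun i' => v 0 * (1 - u i'.succ * v 0)⁻¹) i)
            (fun j' => Matrix.vecCons (0:ℝ)
              (fun i' => v j'.succ * (1 - u i'.succ * v j'.succ)⁻¹
                       - v 0 * (1 - u i'.succ * v 0)⁻¹) i) j with hP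
    have s3 : N.det = P.det := by
      rw [← Matrix.det_transpose N, ← Matrix.det_transpose P]
      refine det_eq_of_forall_row_eq_smul_add_const (Matrix.vecCons 0 1) 0
        (Matrix.cons_val_zero _ _) ?_
      intro j i
      refine Fin.cases ?_ (fun j => ?_) j
      · simp [hN, hP]
      · refine Fin.cases ?_ (fun i => ?_) i
        · simp [hN, hP]
        · simp only [hN, hP, Matrix.transpose_apply, Matrix.of_apply, Matrix.cons_val_succ,
            Matrix.cons_val_zero, Pi.one_apply]
          ring
    -- step 4 : expand along row 0
    have s4 : P.det = Matrix.det (Matrix.of fun i j : Fin n =>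
        v j.succ * (1 - u i.succ * v j.succ)⁻¹ - v 0 * (1 - u i.succ * v 0)⁻¹) := by
      rw [Matrix.det_succ_row_zero, Fin.sum_univ_succ]
      have h00 : P 0 0 = 1 := by simp [hP]
      have h0s : ∀ j : Fin n, P 0 j.succ = 0 := by intro j; simp [hP]
      simp only [h00, h0s, mul_zero, zero_mul, Finset.sum_const_zero, add_zero,
        Fin.val_zero, pow_zero, one_mul, mul_one, Fin.succAbove_zero]
      congr 1
    -- step 5 : factor and recurse
    have key : ∀ (i j : Fin n),
        v j.succ * (1 - u i.succ * v j.succ)⁻¹ - v 0 * (1 - u i.succ * v 0)⁻¹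
          = (v j.succ - v 0) * ((1 - u i.succ * v 0)⁻¹ * (1 - u i.succ * v j.succ)⁻¹) := by
      intro i j
      have h1 : (1:ℝ) - v j.succ * u i.succ ≠ 0 := by rw [mul_comm]; exact hd i.succ j.succ
      have h2 : (1:ℝ) - v 0 * u i.succ ≠ 0 := by rw [mul_comm]; exact hd i.succ 0
      field_simp [hd i.succ j.succ, hd i.succ 0, h1, h2]
      ring
    have s5 : Matrix.det (Matrix.of fun i j : Fin n =>
        v j.succ * (1 - u i.succ * v j.succ)⁻¹ - v 0 * (1 - u i.succ * v 0)⁻¹) =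
        (∏ j : Fin n, (v j.succ - v 0)) * ((∏ i : Fin n, (1 - u i.succ * v 0)⁻¹) *
          Matrix.det (Matrix.of fun i j : Fin n => (1 - u i.succ * v j.succ)⁻¹)) := by
      rw [show (Matrix.of fun i j : Fin n =>
        v j.succ * (1 - u i.succ * v j.succ)⁻¹ - v 0 * (1 - u i.succ * v 0)⁻¹) =
        Matrix.of (fun i j : Fin n => (v j.succ - v 0) *
          (Matrix.of (fun i j : Fin n => (1 - u i.succ * v 0)⁻¹ *
            (Matrix.of fun i j : Fin n => (1 - u i.succ * v j.succ)⁻¹) i j)) i j) from ?_]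
      · rw [Matrix.det_mul_row]
        congr 1
        exact Matrix.det_mul_column _ _
      · ext i j
        simp only [Matrix.of_apply]
        rw [key i j]
    have s6 := ih (fun i => u i.succ) (fun j => v j.succ) (fun i j => hd i.succ j.succ)
    -- assemble
    rw [s1, s2, s3, s4, s5, s6]
    have hD0 : (∏ j, (1 - u 0 * v j)) ≠ 0 :=
      Finset.prod_ne_zero_iff.2 fun j _ => hd 0 j
    have hDi0 : (∏ i : Fin n, (1 - u i.succ * v 0)) ≠ 0 :=
      Finset.prod_ne_zero_iff.2 fun i _ => hd i.succ 0
    have hDss : (∏ i : Fin n, ∏ j : Fin n, (1 - u i.succ * v j.succ)) ≠ 0 :=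
      Finset.prod_ne_zero_iff.2 fun i _ => Finset.prod_ne_zero_iff.2 fun j _ => hd i.succ j.succ
    rw [Fin.prod_univ_succ (f := fun i => ∏ j ∈ Ioi i, (u j - u i) * (v j - v i)),
      Fin.prod_Ioi_zero]
    simp_rw [Fin.prod_Ioi_succ]
    rw [Fin.prod_univ_succ (f := fun i => ∏ j, (1 - u i * v j))]
    conv_rhs => rw [show (∏ i : Fin n, ∏ j : Fin (n+1), (1 - u i.succ * v j)) =
      ∏ i : Fin n, ((1 - u i.succ * v 0) * ∏ j : Fin n, (1 - u i.succ * v j.succ)) from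
      Finset.prod_congr rfl fun i _ => Fin.prod_univ_succ _]
    rw [Finset.prod_mul_distrib, Finset.prod_mul_distrib, Finset.prod_inv_distrib,
      Finset.prod_inv_distrib]
    field_simp


theorem pair_pow {n : ℕ} (g : Fin n → ℝ) :
    (∏ i, ∏ j ∈ Finset.Ioi i, (g i * g j)) * ∏ i, g i = ∏ i, g i ^ n := by
  have h1 : ∀ i : Fin n, ∏ j ∈ Finset.Ioi i, (g i * g j)
      = g i ^ (Finset.Ioi i).card * ∏ j ∈ Finset.Ioi i, g j := by
    intro i; rw [Finset.prod_mul_distrib, Finset.prod_const]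
  simp_rw [h1]
  rw [Finset.prod_mul_distrib]
  have h2 : (∏ i, ∏ j ∈ Finset.Ioi i, g j) = ∏ j : Fin n, g j ^ (Finset.Iio j).card := by
    rw [Finset.prod_comm' (t' := Finset.univ) (s' := fun j => Finset.Iio j)
      (fun i j => by simp)]
    exact Finset.prod_congr rfl fun j _ => by rw [Finset.prod_const]
  rw [h2, mul_assoc, ← Finset.prod_mul_distrib, ← Finset.prod_mul_distrib]
  refine Finset.prod_congr rfl fun i _ => ?_
  rw [Fin.card_Ioi, Fin.card_Iio, ← pow_succ, ← pow_add]
  congr 1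
  have := i.isLt; omega

/-- Determinant evaluation for the half-disk Poisson kernel
h(x,θ) = (1/π)(1-x²)/(1-2x cos θ + x²). -/
theorem stmt_7 (n : ℕ) (x θ : Fin n → ℝ)
    (hx : ∀ i, x i ∈ Set.Ioo (-1 : ℝ) 1) (hθ : ∀ j, θ j ∈ Set.Ioo 0 Real.pi) :
    Matrix.det (Matrix.of fun i j : Fin n =>
        (1 / Real.pi) * (1 - (x i) ^ 2) / (1 - 2 * x i * Real.cos (θ j) + (x i) ^ 2)) =
      Real.pi ^ (-(n : ℤ)) * (∏ i, (1 - (x i) ^ 2)) *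
        (∏ i, ∏ j ∈ Finset.univ.filter (fun j => i < j), ((x i - x j) * (1 - x i * x j))) *
        (∏ i, ∏ j, (1 - 2 * x i * Real.cos (θ j) + (x i) ^ 2))⁻¹ *
        ∏ i, ∏ j ∈ Finset.univ.filter (fun j => i < j),
          (2 * (Real.cos (θ i) - Real.cos (θ j))) := by
  set c : Fin n → ℝ := fun j => Real.cos (θ j) with hcdef
  set u : Fin n → ℝ := fun i => 2 * x i / (1 + x i ^ 2) with hudef
  have hc1 : ∀ j, c j < 1 := by
    intro j
    have h := hθ j
    have := Real.cos_lt_cos_of_nonneg_of_le_pi le_rfl h.2.le h.1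
    simpa using this
  have hc2 : ∀ j, -1 < c j := by
    intro j
    have h := hθ j
    have := Real.cos_lt_cos_of_nonneg_of_le_pi h.1.le le_rfl h.2
    simpa using this
  have hg : ∀ i, (0:ℝ) < 1 + x i ^ 2 := fun i => by positivity
  have hgne : ∀ i, (1:ℝ) + x i ^ 2 ≠ 0 := fun i => (hg i).ne'
  have hD : ∀ i j, 0 < 1 - 2 * x i * c j + x i ^ 2 := by
    intro i j
    nlinarith [sq_nonneg (x i - c j), mul_pos (sub_pos.2 (hc1 j)) (by linarith [hc2 j] : (0:ℝ) < 1 + c j)]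
  have hDne : ∀ i j, (1:ℝ) - 2 * x i * c j + x i ^ 2 ≠ 0 := fun i j => (hD i j).ne'
  have huc : ∀ i j, 1 - u i * c j = (1 - 2 * x i * c j + x i ^ 2) / (1 + x i ^ 2) := by
    intro i j
    rw [hudef]
    field_simp
    ring
  have hne : ∀ i j, (1:ℝ) - u i * c j ≠ 0 := fun i j => by
    rw [huc i j]; exact (div_pos (hD i j) (hg i)).ne'
  have hM : (Matrix.of fun i j : Fin n =>
        (1 / Real.pi) * (1 - (x i) ^ 2) / (1 - 2 * x i * c j + (x i) ^ 2)) =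
      Matrix.of fun i j : Fin n => (1 / Real.pi * (1 - x i ^ 2) / (1 + x i ^ 2)) *
        (Matrix.of fun i j : Fin n => (1 - u i * c j)⁻¹) i j := by
    ext i j
    simp only [Matrix.of_apply]
    rw [huc i j, inv_div]
    rw [div_mul_div_comm]
    rw [div_eq_div_iff (hDne i j) (mul_ne_zero (hgne i) (hDne i j))]
    ring
  rw [hM, Matrix.det_mul_column, cauchy_det u c hne]
  -- rewrite the filters as Ioi
  have hfil : ∀ i : Fin n, Finset.univ.filter (fun j => i < j) = Finset.Ioi i := by
    intro i; ext j; simp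
  simp only [hfil]
  -- pairwise numerator
  have hnum : ∀ i j : Fin n, (u j - u i) * (c j - c i) =
      ((x i - x j) * (1 - x i * x j) * (2 * (c i - c j))) / ((1 + x i ^ 2) * (1 + x j ^ 2)) := by
    intro i j
    rw [hudef]
    field_simp
    ring
  simp only [hnum]
  rw [show (∏ i, ∏ j ∈ Finset.Ioi i,
        ((x i - x j) * (1 - x i * x j) * (2 * (c i - c j))) / ((1 + x i ^ 2) * (1 + x j ^ 2)))
      = (∏ i, ∏ j ∈ Finset.Ioi i, (x i - x j) * (1 - x i * x j) * (2 * (c i - c j))) /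
        (∏ i, ∏ j ∈ Finset.Ioi i, ((1 + x i ^ 2) * (1 + x j ^ 2))) from by
    simp_rw [Finset.prod_div_distrib]]
  -- denominator
  have hden : (∏ i, ∏ j, (1 - u i * c j)) =
      (∏ i, ∏ j, (1 - 2 * x i * c j + x i ^ 2)) / ∏ i, (1 + x i ^ 2) ^ n := by
    simp only [huc]
    simp_rw [Finset.prod_div_distrib, Finset.prod_const, Finset.card_univ, Fintype.card_fin]
  rw [hden]
  -- split the pair product
  rw [show (∏ i, ∏ j ∈ Finset.Ioi i, (x i - x j) * (1 - x i * x j) * (2 * (c i - c j)))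
      = (∏ i, ∏ j ∈ Finset.Ioi i, (x i - x j) * (1 - x i * x j)) *
        (∏ i, ∏ j ∈ Finset.Ioi i, (2 * (c i - c j))) from by
    simp_rw [Finset.prod_mul_distrib]]
  -- prefactor product
  rw [show (∏ i, (1 / Real.pi * (1 - x i ^ 2) / (1 + x i ^ 2)))
      = (1 / Real.pi) ^ n * (∏ i, (1 - x i ^ 2)) / ∏ i, (1 + x i ^ 2) from by
    rw [Finset.prod_div_distrib, Finset.prod_mul_distrib, Finset.prod_const,
      Finset.card_univ, Fintype.card_fin]]
  -- use pair_pow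
  have hpp := pair_pow (fun i => 1 + x i ^ 2)
  rw [← hpp]
  -- nonvanishing
  have hGne : (∏ i, ((1:ℝ) + x i ^ 2)) ≠ 0 := Finset.prod_ne_zero_iff.2 fun i _ => hgne i
  have hSne : (∏ i, ∏ j ∈ Finset.Ioi i, ((1 + x i ^ 2) * (1 + x j ^ 2))) ≠ 0 :=
    Finset.prod_ne_zero_iff.2 fun i _ => Finset.prod_ne_zero_iff.2 fun j _ =>
      mul_ne_zero (hgne i) (hgne j)
  have hDtne : (∏ i, ∏ j, ((1:ℝ) - 2 * x i * c j + x i ^ 2)) ≠ 0 :=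
    Finset.prod_ne_zero_iff.2 fun i _ => Finset.prod_ne_zero_iff.2 fun j _ => hDne i j
  simp only [hcdef] at hDtne hpp hGne hSne ⊢
  rw [_root_.zpow_neg, zpow_natCast]
  field_simp
  have hpi : (1 / Real.pi) ^ n * Real.pi ^ n = 1 := by
    rw [← mul_pow, one_div, inv_mul_cancel₀ Real.pi_ne_zero, one_pow]
  linear_combination (((∏ i, (1 - x i ^ 2)) * ∏ i, ∏ j ∈ Ioi i, (x i - x j) * (1 - x i * x j)) *
    ∏ i, ∏ j ∈ Ioi i, 2 * (Real.cos (θ i) - Real.cos (θ j))) * hpi
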